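/- If F : Ω → ℝ ⊕ ℝi ⊕ ℝj is a C¹ reduced quaternion-valued function on a connected open set Ω ⊆ ℝ², λ ∈ ℝ \ {0}, F satisfies DF + λF = 0, and the scalar part of F is constant on Ω, then F is identically zero. -/

import Mathlib

/-- The quaternionic imaginary unit `i`. -/
def quatI : Quaternion ℝ := ⟨0, 1, 0, 0⟩

/-- The quaternionic imaginary unit `j`. -/
def quatJ : Quaternion ℝ := ⟨0, 0, 1, 0⟩

/-- The quaternionic Dirac operator `D = i ∂/∂x + j ∂/∂y` acting on the left. -/
noncomputable def diracD (F : ℝ × ℝ → Quaternion ℝ) (p : ℝ × ℝ) : Quaternion ℝ :=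
  quatI * fderiv ℝ F p (1, 0) +
    quatJ * fderiv ℝ F p (0, 1)

/-- The real part of a quaternion, as a continuous linear map. -/
noncomputable def reCLM : Quaternion ℝ →L[ℝ] ℝ :=
  LinearMap.toContinuousLinearMap
    { toFun := QuaternionAlgebra.re, map_add' := fun _ _ => rfl, map_smul' := fun _ _ => rfl }

/-- The `i`-part of a quaternion, as a continuous linear map. -/
noncomputable def iCLM : Quaternion ℝ →L[ℝ] ℝ :=
  LinearMap.toContinuousLinearMap
    { toFun := QuaternionAlgebra.imI, map_add' := fun _ _ => rfl, map_smul' := fun _ _ => rfl }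

/-- The `j`-part of a quaternion, as a continuous linear map. -/
noncomputable def jCLM : Quaternion ℝ →L[ℝ] ℝ :=
  LinearMap.toContinuousLinearMap
    { toFun := QuaternionAlgebra.imJ, map_add' := fun _ _ => rfl, map_smul' := fun _ _ => rfl }

/-- The `k`-part of a quaternion, as a continuous linear map. -/
noncomputable def kCLM : Quaternion ℝ →L[ℝ] ℝ :=
  LinearMap.toContinuousLinearMap
    { toFun := QuaternionAlgebra.imK, map_add' := fun _ _ => rfl, map_smul' := fun _ _ => rfl }

/-- If a linear component of `F` is constant on an open set, the corresponding
component of the derivative vanishes there. -/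
lemma comp_deriv_zero {Ω : Set (ℝ × ℝ)} (hΩ : IsOpen Ω) {F : ℝ × ℝ → Quaternion ℝ}
    {p : ℝ × ℝ} (hp : p ∈ Ω) (hd : DifferentiableAt ℝ F p)
    (L : Quaternion ℝ →L[ℝ] ℝ) (c : ℝ) (h : ∀ q ∈ Ω, L (F q) = c) (v : ℝ × ℝ) :
    L (fderiv ℝ F p v) = 0 := by
  have h1 : (fun q => L (F q)) =ᶠ[nhds p] fun _ => c :=
    Filter.eventually_of_mem (hΩ.mem_nhds hp) h
  have h2 : fderiv ℝ (fun q => L (F q)) p = 0 := by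
    rw [h1.fderiv_eq]; exact fderiv_const_apply c
  have h3 := (L.hasFDerivAt.comp p hd.hasFDerivAt).fderiv
  have : (L.comp (fderiv ℝ F p)) v = 0 := by
    rw [← h3]; exact congrFun (congrArg _ h2) v
  simpa using this

/-- If `F` is a `C¹` reduced quaternion-valued `λ`-metamonogenic function
(`DF + λF = 0`, `λ ≠ 0`) on a connected open set `Ω ⊆ ℝ²` whose scalar part is
constant on `Ω`, then `F` vanishes identically on `Ω`. -/
theorem metamonogenic_const_scalar_eq_zero (Ω : Set (ℝ × ℝ)) (hΩ : IsOpen Ω)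
    (hconn : IsConnected Ω) (lam : ℝ) (hlam : lam ≠ 0)
    (F : ℝ × ℝ → Quaternion ℝ) (hF : ContDiffOn ℝ 1 F Ω)
    (hred : ∀ p ∈ Ω, (F p).imK = 0)
    (hmeta : ∀ p ∈ Ω, diracD F p + lam • F p = 0)
    (hconst : ∃ c : ℝ, ∀ p ∈ Ω, (F p).re = c) :
    ∀ p ∈ Ω, F p = 0 := by
  obtain ⟨c, hc⟩ := hconst
  have hdiff : ∀ p ∈ Ω, DifferentiableAt ℝ F p := fun p hp =>
    (hF.contDiffAt (hΩ.mem_nhds hp)).differentiableAt one_ne_zero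
  have hre : ∀ p ∈ Ω, ∀ v, (fderiv ℝ F p v).re = 0 := fun p hp v =>
    comp_deriv_zero hΩ hp (hdiff p hp) reCLM c hc v
  have hk : ∀ p ∈ Ω, ∀ v, (fderiv ℝ F p v).imK = 0 := fun p hp v =>
    comp_deriv_zero hΩ hp (hdiff p hp) kCLM 0 hred v
  have hIJ : ∀ p ∈ Ω, (F p).imI = 0 ∧ (F p).imJ = 0 := by
    intro p hp
    have heq := hmeta p hp
    have h1 : (diracD F p + lam • F p).imI = 0 := by rw [heq]; rfl
    have h2 : (diracD F p + lam • F p).imJ = 0 := by rw [heq]; rfl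
    simp only [diracD, Quaternion.imI_add, Quaternion.imJ_add,
      Quaternion.imI_mul, Quaternion.imJ_mul, Quaternion.imI_smul, Quaternion.imJ_smul,
      smul_eq_mul, hre p hp, hk p hp] at h1 h2
    simp only [quatI, quatJ] at h1 h2
    constructor
    · have : lam * (F p).imI = 0 := by linarith [h1]
      exact (mul_eq_zero.1 this).resolve_left hlam
    · have : lam * (F p).imJ = 0 := by linarith [h2]
      exact (mul_eq_zero.1 this).resolve_left hlam
  intro p hp
  have hi : ∀ v, (fderiv ℝ F p v).imI = 0 := fun v =>
    comp_deriv_zero hΩ hp (hdiff p hp) iCLM 0 (fun q hq => (hIJ q hq).1) v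
  have hj : ∀ v, (fderiv ℝ F p v).imJ = 0 := fun v =>
    comp_deriv_zero hΩ hp (hdiff p hp) jCLM 0 (fun q hq => (hIJ q hq).2) v
  have heq := hmeta p hp
  have h0 : (diracD F p + lam • F p).re = 0 := by rw [heq]; rfl
  simp only [diracD, Quaternion.re_add, Quaternion.re_mul,
    Quaternion.re_smul, smul_eq_mul, hi, hj, hre p hp, hk p hp] at h0
  simp only [quatI, quatJ] at h0
  have hre0 : (F p).re = 0 := by
    have : lam * (F p).re = 0 := by linarith [h0]
    exact (mul_eq_zero.1 this).resolve_left hlam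
  ext <;> simp [hre0, (hIJ p hp).1, (hIJ p hp).2, hred p hp] <;> rfl
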